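/- For a standard normal Z and real constants a, b, E[Φ(a + bZ)] = Φ(a/√(1+b²)), where Φ is the standard normal CDF. -/

import Mathlib

open MeasureTheory ProbabilityTheory Real

lemma gauss_pdf_conv_pointwise (b s z : ℝ) :
    gaussianPDFReal 0 1 (s + b*z) * gaussianPDFReal 0 1 z
      = gaussianPDFReal 0 (NNReal.mk (1+b^2) (by positivity)) s *
        gaussianPDFReal (-(b*s)/(1+b^2)) (NNReal.mk (1+b^2)⁻¹ (by positivity)) z := by
  have hb : (0:ℝ) < 1 + b^2 := by positivity
  simp only [gaussianPDFReal, NNReal.coe_mk, NNReal.coe_one, sub_zero]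
  rw [mul_mul_mul_comm (√(2 * π * 1))⁻¹, mul_mul_mul_comm (√(2 * π * (1+b^2)))⁻¹,
    ← Real.exp_add, ← Real.exp_add, ← mul_inv, ← mul_inv,
    ← Real.sqrt_mul (by positivity), ← Real.sqrt_mul (by positivity)]
  have h1 : 2 * π * 1 * (2 * π * 1) = 2 * π * (1+b^2) * (2 * π * (1+b^2)⁻¹) := by
    field_simp
  have h2 : -(s + b * z) ^ 2 / (2*1) + -z ^ 2 / (2*1)
      = -s ^ 2 / (2 * (1 + b ^ 2)) + -(z - -(b * s) / (1 + b ^ 2)) ^ 2 / (2 * (1 + b ^ 2)⁻¹) := by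
    field_simp; ring
  rw [h1, h2]

lemma gauss_pdf_conv_lintegral (b s : ℝ) :
    ∫⁻ z, gaussianPDF 0 1 (s + b*z) * gaussianPDF 0 1 z
      = gaussianPDF 0 (NNReal.mk (1+b^2) (by positivity)) s := by
  have hb : (0:ℝ) < 1 + b^2 := by positivity
  have hW : (NNReal.mk (1+b^2)⁻¹ (by positivity) : NNReal) ≠ 0 := by
    intro h
    have := congrArg NNReal.toReal h
    simp only [NNReal.coe_mk, NNReal.coe_zero] at this
    exact (inv_pos.mpr hb).ne' this
  simp only [gaussianPDF]
  have h1 : ∀ z, ENNReal.ofReal (gaussianPDFReal 0 1 (s + b*z)) *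
      ENNReal.ofReal (gaussianPDFReal 0 1 z)
      = ENNReal.ofReal (gaussianPDFReal 0 1 (s + b*z) * gaussianPDFReal 0 1 z) := by
    intro z
    rw [← ENNReal.ofReal_mul (gaussianPDFReal_nonneg _ _ _)]
  simp_rw [h1, gauss_pdf_conv_pointwise b s]
  rw [← ofReal_integral_eq_lintegral_ofReal
      ((integrable_gaussianPDFReal _ _).const_mul _)
      (ae_of_all _ fun z => mul_nonneg (gaussianPDFReal_nonneg _ _ _)
        (gaussianPDFReal_nonneg _ _ _)),
    integral_const_mul, integral_gaussianPDFReal_eq_one _ hW, mul_one]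

theorem gaussian_cdf_identity (a b : ℝ) :
    let Φ := fun x : ℝ => ((gaussianReal 0 1) (Set.Iic x)).toReal
    ∫ z, Φ (a + b * z) ∂(gaussianReal 0 1) = Φ (a / Real.sqrt (1 + b ^ 2)) := by
  intro Φ
  set γ := gaussianReal 0 1 with hγ
  have hb : (0:ℝ) < 1 + b^2 := by positivity
  set V : NNReal := NNReal.mk (1+b^2) (by positivity) with hV
  have hVne : V ≠ 0 := by
    intro h
    have := congrArg NNReal.toReal h
    simp only [hV, NNReal.coe_mk, NNReal.coe_zero] at this
    exact hb.ne' this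
  -- Step 1: rewrite each CDF value as a set lintegral of a shifted pdf
  have h1 : ∀ z : ℝ, γ (Set.Iic (a + b*z))
      = ∫⁻ s in Set.Iic a, gaussianPDF 0 1 (s + b*z) := by
    intro z
    have hmap : gaussianReal (-(b*z)) 1 = γ.map (· + -(b*z)) := by
      rw [hγ, gaussianReal_map_add_const, zero_add]
    have hpre : (· + -(b*z)) ⁻¹' Set.Iic a = Set.Iic (a + b*z) := by
      ext x
      simp only [Set.mem_preimage, Set.mem_Iic]
      constructor <;> intro h <;> linarith
    calc γ (Set.Iic (a + b*z)) = γ.map (· + -(b*z)) (Set.Iic a) := by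
          rw [Measure.map_apply (by fun_prop) measurableSet_Iic, hpre]
      _ = gaussianReal (-(b*z)) 1 (Set.Iic a) := by rw [hmap]
      _ = ∫⁻ s in Set.Iic a, gaussianPDF (-(b*z)) 1 s := gaussianReal_apply _ one_ne_zero _
      _ = ∫⁻ s in Set.Iic a, gaussianPDF 0 1 (s + b*z) := by
          congr 1
          ext s
          rw [gaussianPDF, gaussianPDF, gaussianPDFReal_add, zero_sub]
  -- measurability of joint pdf
  have hjm : Measurable (fun p : ℝ × ℝ => gaussianPDF 0 1 (p.2 + b * p.1)) :=
    (measurable_gaussianPDF 0 1).comp (by fun_prop)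
  have hFm : Measurable (fun z => ∫⁻ s in Set.Iic a, gaussianPDF 0 1 (s + b*z)) :=
    hjm.lintegral_prod_right'
  -- Step 2: Bochner integral to lintegral
  have h2 : ∫ z, Φ (a + b * z) ∂γ
      = (∫⁻ z, γ (Set.Iic (a + b*z)) ∂γ).toReal := by
    rw [integral_toReal]
    · exact hFm.aemeasurable.congr (ae_of_all _ fun z => (h1 z).symm)
    · exact ae_of_all _ fun z => measure_lt_top _ _
  rw [h2]
  -- Step 3: compute the lintegral
  have h3 : ∫⁻ z, γ (Set.Iic (a + b*z)) ∂γ = gaussianReal 0 V (Set.Iic a) := by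
    calc ∫⁻ z, γ (Set.Iic (a + b*z)) ∂γ
        = ∫⁻ z, (∫⁻ s in Set.Iic a, gaussianPDF 0 1 (s + b*z)) ∂γ := by simp_rw [h1]
      _ = ∫⁻ z, gaussianPDF 0 1 z * (∫⁻ s in Set.Iic a, gaussianPDF 0 1 (s + b*z)) := by
          rw [hγ, gaussianReal_of_var_ne_zero _ one_ne_zero,
            lintegral_withDensity_eq_lintegral_mul _ (measurable_gaussianPDF 0 1) hFm]
          rfl
      _ = ∫⁻ z, ∫⁻ s in Set.Iic a, gaussianPDF 0 1 (s + b*z) * gaussianPDF 0 1 z := by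
          congr 1
          ext z
          have hsm : AEMeasurable (fun s : ℝ => gaussianPDF 0 1 (s + b*z))
              (volume.restrict (Set.Iic a)) :=
            ((measurable_gaussianPDF 0 1).comp (by fun_prop)).aemeasurable
          rw [mul_comm, ← lintegral_mul_const'' _ hsm]
      _ = ∫⁻ s in Set.Iic a, ∫⁻ z, gaussianPDF 0 1 (s + b*z) * gaussianPDF 0 1 z := by
          rw [lintegral_lintegral_swap]
          have hpm : Measurable (fun p : ℝ × ℝ =>
              gaussianPDF 0 1 (p.2 + b * p.1) * gaussianPDF 0 1 p.1) :=
            ((measurable_gaussianPDF 0 1).comp (by fun_prop)).mul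
              ((measurable_gaussianPDF 0 1).comp measurable_fst)
          exact hpm.aemeasurable
      _ = ∫⁻ s in Set.Iic a, gaussianPDF 0 V s := by
          congr 1
          ext s
          exact gauss_pdf_conv_lintegral b s
      _ = gaussianReal 0 V (Set.Iic a) := (gaussianReal_apply _ hVne _).symm
  rw [h3]
  -- Step 4: scaling
  have h4 : gaussianReal 0 V (Set.Iic a) = γ (Set.Iic (a / Real.sqrt (1+b^2))) := by
    have hc : (0:ℝ) < Real.sqrt (1+b^2) := Real.sqrt_pos.mpr hb
    have hVeq : (NNReal.mk ((Real.sqrt (1+b^2))^2) (sq_nonneg _) : NNReal) * 1 = V := by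
      ext
      simp [Real.sq_sqrt hb.le, hV]
    have hmap : gaussianReal 0 V = γ.map (Real.sqrt (1+b^2) * ·) := by
      rw [hγ, gaussianReal_map_const_mul, mul_zero, hVeq]
    rw [hmap, Measure.map_apply (by fun_prop) measurableSet_Iic]
    congr 1
    ext x
    simp only [Set.mem_preimage, Set.mem_Iic]
    rw [← le_div_iff₀' hc]
  rw [h4]
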